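/- The rational quaternion algebra B_6 = (−6, 2 / ℚ), i.e. the quaternion algebra ℍ[ℚ, −6, 2] with basis 1, i, j, k satisfying i² = −6, j² = 2, ij = −ji = k, is a division ring (every nonzero element is invertible). -/

import Mathlib

open Quaternion

private lemma zmod3_sq1 : ∀ x y : ZMod 3, x^2 = 2*y^2 → x = 0 ∧ y = 0 := by decide

private lemma zmod3_sq2 : ∀ x y : ZMod 3, 2*x^2 = y^2 → x = 0 ∧ y = 0 := by decide

private lemma keyZ : ∀ n : ℕ, ∀ r a b c : ℤ,
    r.natAbs + a.natAbs + b.natAbs + c.natAbs ≤ n →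
    r^2 + 6*a^2 = 2*b^2 + 12*c^2 → r = 0 ∧ a = 0 ∧ b = 0 ∧ c = 0 := by
  intro n
  induction n using Nat.strong_induction_on with
  | _ n ih =>
    intro r a b c hm h
    by_cases hz : r = 0 ∧ a = 0 ∧ b = 0 ∧ c = 0
    · exact hz
    -- mod 3: r² = 2 b²
    have h31 : ((r : ZMod 3))^2 = 2*(b : ZMod 3)^2 := by
      have := congrArg (fun z : ℤ => (z : ZMod 3)) h
      push_cast at this
      have h6 : (6 : ZMod 3) = 0 := by decide
      have h12 : (12 : ZMod 3) = 0 := by decide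
      rw [h6, h12] at this
      linear_combination this
    obtain ⟨hr0, hb0⟩ := zmod3_sq1 _ _ h31
    have hr3 : (3:ℤ) ∣ r := (ZMod.intCast_zmod_eq_zero_iff_dvd r 3).mp hr0
    have hb3 : (3:ℤ) ∣ b := (ZMod.intCast_zmod_eq_zero_iff_dvd b 3).mp hb0
    obtain ⟨r', rfl⟩ := hr3
    obtain ⟨b', rfl⟩ := hb3
    have h2 : 3*r'^2 + 2*a^2 = 6*b'^2 + 4*c^2 := by nlinarith [h]
    have h32 : 2*((a : ZMod 3))^2 = (c : ZMod 3)^2 := by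
      have := congrArg (fun z : ℤ => (z : ZMod 3)) h2
      push_cast at this
      have e3 : (3 : ZMod 3) = 0 := by decide
      have e6 : (6 : ZMod 3) = 0 := by decide
      have e4 : (4 : ZMod 3) = 1 := by decide
      rw [e3, e6, e4] at this
      linear_combination this
    obtain ⟨ha0, hc0⟩ := zmod3_sq2 _ _ h32
    have ha3 : (3:ℤ) ∣ a := (ZMod.intCast_zmod_eq_zero_iff_dvd a 3).mp ha0
    have hc3 : (3:ℤ) ∣ c := (ZMod.intCast_zmod_eq_zero_iff_dvd c 3).mp hc0
    obtain ⟨a', rfl⟩ := ha3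
    obtain ⟨c', rfl⟩ := hc3
    have h3 : r'^2 + 6*a'^2 = 2*b'^2 + 12*c'^2 := by nlinarith [h2]
    -- measure decreases
    have hne : r' ≠ 0 ∨ a' ≠ 0 ∨ b' ≠ 0 ∨ c' ≠ 0 := by
      by_contra hcon
      push_neg at hcon
      exact hz ⟨by simp [hcon.1], by simp [hcon.2.1], by simp [hcon.2.2.1],
        by simp [hcon.2.2.2]⟩
    have hlt : r'.natAbs + a'.natAbs + b'.natAbs + c'.natAbs < n := by
      have e1 : (3*r').natAbs = 3 * r'.natAbs := by simp [Int.natAbs_mul]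
      have e2 : (3*a').natAbs = 3 * a'.natAbs := by simp [Int.natAbs_mul]
      have e3 : (3*b').natAbs = 3 * b'.natAbs := by simp [Int.natAbs_mul]
      have e4 : (3*c').natAbs = 3 * c'.natAbs := by simp [Int.natAbs_mul]
      rw [e1, e2, e3, e4] at hm
      rcases hne with hx|hx|hx|hx <;>
        · have := Int.natAbs_pos.mpr hx
          omega
    obtain ⟨e1, e2, e3, e4⟩ := ih _ hlt r' a' b' c' le_rfl h3
    exact ⟨by simp [e1], by simp [e2], by simp [e3], by simp [e4]⟩

private lemma keyQ (q a b c : ℚ) (h : q^2 + 6*a^2 = 2*b^2 + 12*c^2) :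
    q = 0 ∧ a = 0 ∧ b = 0 ∧ c = 0 := by
  set R : ℤ := q.num * (a.den * b.den * c.den) with hR
  set A : ℤ := a.num * (q.den * b.den * c.den) with hA
  set B : ℤ := b.num * (q.den * a.den * c.den) with hB
  set C : ℤ := c.num * (q.den * a.den * b.den) with hC
  have hq : (q.den : ℚ) ≠ 0 := by exact_mod_cast q.den_nz
  have ha : (a.den : ℚ) ≠ 0 := by exact_mod_cast a.den_nz
  have hb : (b.den : ℚ) ≠ 0 := by exact_mod_cast b.den_nz
  have hc : (c.den : ℚ) ≠ 0 := by exact_mod_cast c.den_nz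
  have hqn : (q.num : ℚ) = q * q.den :=
    (div_eq_iff hq).mp (Rat.num_div_den q)
  have han : (a.num : ℚ) = a * a.den :=
    (div_eq_iff ha).mp (Rat.num_div_den a)
  have hbn : (b.num : ℚ) = b * b.den :=
    (div_eq_iff hb).mp (Rat.num_div_den b)
  have hcn : (c.num : ℚ) = c * c.den :=
    (div_eq_iff hc).mp (Rat.num_div_den c)
  have hZ : (R:ℚ)^2 + 6*(A:ℚ)^2 = 2*(B:ℚ)^2 + 12*(C:ℚ)^2 := by
    rw [hR, hA, hB, hC]
    push_cast
    rw [hqn, han, hbn, hcn]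
    ring_nf
    nlinarith [h, sq_nonneg ((q.den:ℚ)*(a.den:ℚ)*(b.den:ℚ)*(c.den:ℚ))]
  have hZ' : R^2 + 6*A^2 = 2*B^2 + 12*C^2 := by exact_mod_cast hZ
  obtain ⟨e1, e2, e3, e4⟩ := keyZ _ R A B C le_rfl hZ'
  have hdz : ∀ v : ℚ, ((v.den : ℤ)) ≠ 0 := fun v => Int.natCast_ne_zero.mpr v.den_nz
  have d1 : q = 0 := Rat.num_eq_zero.mp (by
    rcases mul_eq_zero.mp e1 with h0 | h0
    · exact h0
    · exact absurd h0 (mul_ne_zero (mul_ne_zero (hdz a) (hdz b)) (hdz c)))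
  have d2 : a = 0 := Rat.num_eq_zero.mp (by
    rcases mul_eq_zero.mp e2 with h0 | h0
    · exact h0
    · exact absurd h0 (mul_ne_zero (mul_ne_zero (hdz q) (hdz b)) (hdz c)))
  have d3 : b = 0 := Rat.num_eq_zero.mp (by
    rcases mul_eq_zero.mp e3 with h0 | h0
    · exact h0
    · exact absurd h0 (mul_ne_zero (mul_ne_zero (hdz q) (hdz a)) (hdz c)))
  have d4 : c = 0 := Rat.num_eq_zero.mp (by
    rcases mul_eq_zero.mp e4 with h0 | h0
    · exact h0
    · exact absurd h0 (mul_ne_zero (mul_ne_zero (hdz q) (hdz a)) (hdz b)))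
  exact ⟨d1, d2, d3, d4⟩

/-- The rational quaternion algebra `B₆ = (−6, 2 / ℚ)` is a division ring:
every nonzero element is invertible. -/
theorem stmt_0 : ∀ x : ℍ[ℚ, -6, 2], x ≠ 0 → ∃ y : ℍ[ℚ, -6, 2], x * y = 1 ∧ y * x = 1 := by
  intro x hx
  set n : ℚ := x.re^2 + 6*x.imI^2 - 2*x.imJ^2 - 12*x.imK^2 with hn
  have hn0 : n ≠ 0 := by
    intro h0
    have heq : x.re^2 + 6*x.imI^2 = 2*x.imJ^2 + 12*x.imK^2 := by linarith [hn ▸ h0]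
    obtain ⟨e1, e2, e3, e4⟩ := keyQ _ _ _ _ heq
    exact hx (QuaternionAlgebra.ext e1 e2 e3 e4)
  refine ⟨(⟨x.re/n, -x.imI/n, -x.imJ/n, -x.imK/n⟩ : ℍ[ℚ,-6,2]), ?_, ?_⟩ <;>
  · apply QuaternionAlgebra.ext <;>
    simp only [QuaternionAlgebra.re_mul, QuaternionAlgebra.imI_mul, QuaternionAlgebra.imJ_mul,
      QuaternionAlgebra.imK_mul, QuaternionAlgebra.re_one, QuaternionAlgebra.imI_one,
      QuaternionAlgebra.imJ_one, QuaternionAlgebra.imK_one] <;>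
    field_simp <;>
    linear_combination hn
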